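/- (Descartes' rule of signs, weak form.) Let p be a nonzero polynomial with real coefficients. The number of positive real roots of p, counted without multiplicity, is at most the number of sign changes in the sequence of nonzero coefficients of p ordered by increasing exponent. -/

import Mathlib

open Polynomial

/-- The sequence of nonzero coefficients of `p`, ordered by increasing exponent. -/
noncomputable def nonzeroCoeffList (p : Polynomial ℝ) : List ℝ :=
  ((List.range (p.natDegree + 1)).map p.coeff).filter fun c => c ≠ 0

/-- The number of sign changes in the sequence of nonzero coefficients of `p`. -/
noncomputable def signChanges (p : Polynomial ℝ) : ℕ :=
  (((nonzeroCoeffList p).zip (nonzeroCoeffList p).tail).filter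
    fun q => q.1 * q.2 < 0).length


namespace Descartes
open Polynomial

noncomputable def V (l : List ℝ) : ℕ :=
  ((l.zip l.tail).filter fun q => q.1 * q.2 < 0).length



@[simp] lemma V_nil : V [] = 0 := by simp [V]
@[simp] lemma V_single (a : ℝ) : V [a] = 0 := by simp [V]

lemma V_cons_cons (a b : ℝ) (l : List ℝ) :
    V (a :: b :: l) = (if a * b < 0 then 1 else 0) + V (b :: l) := by
  by_cases h : a * b < 0 <;> simp [V, List.filter_cons, h, Nat.add_comm]

lemma sign_trans {a b c : ℝ} (h1 : 0 < a * c) (h2 : 0 < b * c) : 0 < a * b := by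
  rcases mul_pos_iff.1 h1 with ⟨ha, hc⟩ | ⟨ha, hc⟩ <;>
    rcases mul_pos_iff.1 h2 with ⟨hb, hc'⟩ | ⟨hb, hc'⟩
  · exact mul_pos ha hb
  · linarith
  · linarith
  · exact mul_pos_of_neg_of_neg ha hb

lemma pos_of_ne_of_not_neg {a b : ℝ} (ha : a ≠ 0) (hb : b ≠ 0) (h : ¬ a * b < 0) :
    0 < a * b :=
  ((mul_ne_zero ha hb).lt_or_gt).resolve_left h

lemma V_congr : ∀ {l l' : List ℝ}, List.Forall₂ (fun a b => 0 < a * b) l l' → V l = V l'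
  | [], [], _ => rfl
  | [_], [_], _ => by simp
  | x :: y :: l, x' :: y' :: l', h => by
    rcases h with _ | ⟨hx, h'⟩
    rcases h' with _ | ⟨hy, h''⟩
    rw [V_cons_cons, V_cons_cons, V_congr (List.Forall₂.cons hy h'')]
    congr 1
    by_cases h : x * y < 0
    · rw [if_pos h, if_pos (by nlinarith [mul_pos hx hy])]
    · have hxy : 0 < x * y := by
        rcases mul_pos_iff.1 hx with ⟨h1,_⟩|⟨h1,_⟩ <;> rcases mul_pos_iff.1 hy with ⟨h2,_⟩|⟨h2,_⟩
        · exact mul_pos h1 h2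
        · exact absurd (mul_neg_of_pos_of_neg h1 h2) h
        · exact absurd (mul_neg_of_neg_of_pos h1 h2) h
        · exact mul_pos_of_neg_of_neg h1 h2
      rw [if_neg h, if_neg (by nlinarith [mul_pos hx hy])]

lemma V_append (l1 : List ℝ) (c : ℝ) (l2 : List ℝ) (h : ∀ x ∈ l1, 0 < x * c) :
    V (l1 ++ c :: l2) = V (c :: l2) := by
  induction l1 with
  | nil => rfl
  | cons a t ih =>
    have ha : 0 < a * c := h a (by simp)
    have ih' := ih (fun x hx => h x (by simp [hx]))
    cases t with
    | nil =>
      rw [List.nil_append] at ih'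
      rw [List.cons_append, List.nil_append, V_cons_cons, if_neg (not_lt.2 ha.le)]
      simp
    | cons b t' =>
      have hb : 0 < b * c := h b (by simp)
      have hab : ¬ a * b < 0 := not_lt.2 (sign_trans ha hb).le
      rw [List.cons_append, List.cons_append, V_cons_cons, if_neg hab, ← List.cons_append, ih']
      simp

lemma all_same_sign {l : List ℝ} (hne : ∀ x ∈ l, x ≠ 0) (hV : V l = 0) :
    ∀ a ∈ l, ∀ b ∈ l, 0 < a * b := by
  induction l with
  | nil => simp
  | cons a t ih =>
    cases t with
    | nil =>
      intro x hx y hy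
      simp only [List.mem_singleton] at hx hy
      rw [hx, hy]
      exact mul_self_pos.2 (hne a (by simp))
    | cons b t' =>
      rw [V_cons_cons] at hV
      have hab : ¬ a * b < 0 := fun hlt => by rw [if_pos hlt] at hV; omega
      have hV' : V (b :: t') = 0 := by rw [if_neg hab] at hV; omega
      have hab' : 0 < a * b := by
        rcases (mul_ne_zero (hne a (by simp)) (hne b (by simp))).lt_or_gt with h1 | h1
        · exact absurd h1 hab
        · exact h1
      have IH := ih (fun x hx => hne x (List.mem_cons_of_mem a hx)) hV'
      intro x hx y hy
      rcases List.mem_cons.1 hx with hxa | hx'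
      · rcases List.mem_cons.1 hy with hya | hy'
        · rw [hxa, hya]; exact mul_self_pos.2 (hne a (by simp))
        · rw [hxa]; exact sign_trans (c := b) hab' (IH y hy' b (by simp))
      · rcases List.mem_cons.1 hy with hya | hy'
        · rw [hya]; exact sign_trans (c := b) (IH x hx' b (by simp)) hab'
        · exact IH x hx' y hy'

lemma V_split {l : List ℝ} (hne : ∀ x ∈ l, x ≠ 0) (hV : 1 ≤ V l) :
    ∃ l1 b c l2, l = l1 ++ b :: c :: l2 ∧ (∀ x ∈ l1, 0 < x * b) ∧ b * c < 0 ∧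
      V (c :: l2) = V l - 1 := by
  induction l with
  | nil => simp at hV
  | cons a t ih =>
    cases t with
    | nil => simp at hV
    | cons b t' =>
      by_cases hab : a * b < 0
      · exact ⟨[], a, b, t', rfl, by simp, hab, by rw [V_cons_cons, if_pos hab]; omega⟩
      · have hab' : 0 < a * b := by
          rcases (mul_ne_zero (hne a (by simp)) (hne b (by simp))).lt_or_gt with h1 | h1
          · exact absurd h1 hab
          · exact h1
        have hVt : 1 ≤ V (b :: t') := by rw [V_cons_cons, if_neg hab] at hV; omega
        obtain ⟨l1, b0, c, l2, heq, hpos, hbc, hVc⟩ :=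
          ih (fun x hx => hne x (List.mem_cons_of_mem a hx)) hVt
        refine ⟨a :: l1, b0, c, l2, by rw [List.cons_append, heq], ?_, hbc, ?_⟩
        · intro x hx
          rcases List.mem_cons.1 hx with rfl | hx
          · cases l1 with
            | nil =>
              simp only [List.nil_append, List.cons.injEq] at heq
              rw [← heq.1]; exact hab'
            | cons u l1' =>
              have hub : b = u := by simpa using congrArg (·.head?) heq
              have hu : 0 < u * b0 := hpos u (by simp)
              exact sign_trans (c := u) (hub ▸ hab') (mul_comm u b0 ▸ hu)
          · exact hpos x hx
        · rw [V_cons_cons, if_neg hab]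
          rw [V_cons_cons, if_neg hab] at hV
          omega


noncomputable def K (p : Polynomial ℝ) : List ℕ :=
  (List.range (p.natDegree + 1)).filter fun k => p.coeff k ≠ 0

noncomputable def ncl (p : Polynomial ℝ) : List ℝ :=
  ((List.range (p.natDegree + 1)).map p.coeff).filter fun c => c ≠ 0

lemma ncl_eq_map (p : Polynomial ℝ) : ncl p = (K p).map p.coeff := by
  rw [ncl, K, List.filter_map]
  rfl

lemma mem_K {p : Polynomial ℝ} {k : ℕ} :
    k ∈ K p ↔ k < p.natDegree + 1 ∧ p.coeff k ≠ 0 := by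
  simp [K]

lemma K_sorted (p : Polynomial ℝ) : (K p).Pairwise (· < ·) :=
  (List.pairwise_lt_range).filter _

lemma coeff_mem_ncl {p : Polynomial ℝ} {k : ℕ} (h : p.coeff k ≠ 0) :
    p.coeff k ∈ ncl p := by
  rw [ncl_eq_map]
  exact List.mem_map_of_mem (mem_K.2 ⟨Nat.lt_succ_of_le (le_natDegree_of_ne_zero h), h⟩)

lemma ncl_ne_zero {p : Polynomial ℝ} : ∀ x ∈ ncl p, x ≠ 0 := by
  intro x hx
  rw [ncl, List.mem_filter] at hx
  simpa using hx.2

/-- base case: no sign changes means no positive roots -/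
lemma eval_ne_zero_of_V_eq_zero {p : Polynomial ℝ} (hp : p ≠ 0) (h0 : V (ncl p) = 0)
    {x : ℝ} (hx : 0 < x) : p.eval x ≠ 0 := by
  have hall := all_same_sign ncl_ne_zero h0
  have hld : p.coeff p.natDegree ≠ 0 := fun h => hp (leadingCoeff_eq_zero.1 h)
  have hmem : p.coeff p.natDegree ∈ ncl p := coeff_mem_ncl hld
  have key : ∀ k ∈ p.support, 0 < p.coeff k * p.coeff p.natDegree := by
    intro k hk
    exact hall _ (coeff_mem_ncl (mem_support_iff.1 hk)) _ hmem
  have heval : p.eval x = ∑ k ∈ p.support, p.coeff k * x ^ k := by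
    rw [eval_eq_sum, sum_def]
  have hsupp : p.support.Nonempty := ⟨_, natDegree_mem_support_of_nonzero hp⟩
  rcases hld.lt_or_gt with hneg | hpos
  · have : p.eval x < 0 := by
      rw [heval]
      apply Finset.sum_neg
      · intro k hk
        have h1 := key k hk
        have h2 : p.coeff k < 0 := by
          rcases (mem_support_iff.1 hk).lt_or_gt with h | h
          · exact h
          · nlinarith
        exact mul_neg_of_neg_of_pos h2 (pow_pos hx k)
      · exact hsupp
    exact this.ne
  · have : 0 < p.eval x := by
      rw [heval]
      apply Finset.sum_pos
      · intro k hk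
        have h1 := key k hk
        have h2 : 0 < p.coeff k := by
          rcases (mem_support_iff.1 hk).lt_or_gt with h | h
          · nlinarith
          · exact h
        exact mul_pos h2 (pow_pos hx k)
      · exact hsupp
    exact this.ne'

/-- coefficient of the transformed polynomial -/
lemma coeff_Q (p : Polynomial ℝ) (m : ℕ) (k : ℕ) :
    (X * derivative p - C (m : ℝ) * p).coeff k = ((k : ℝ) - m) * p.coeff k := by
  rw [coeff_sub, coeff_C_mul]
  cases k with
  | zero => simp [mul_coeff_zero]
  | succ n =>
    rw [coeff_X_mul, coeff_derivative]
    push_cast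
    ring

/-- Rolle-type step -/
lemma rolle_step (p : Polynomial ℝ) (m : ℕ) {x y : ℝ} (hx : 0 < x) (hxy : x < y)
    (hpx : p.eval x = 0) (hpy : p.eval y = 0) :
    ∃ z, x < z ∧ z < y ∧ (X * derivative p - C (m : ℝ) * p).eval z = 0 := by
  set f : ℝ → ℝ := fun t => p.eval t / t ^ m with hf
  have hcont : ContinuousOn f (Set.Icc x y) := by
    apply ContinuousOn.div (p.continuous_aeval.continuousOn) ((continuous_pow m).continuousOn)
    intro t ht
    exact pow_ne_zero m (lt_of_lt_of_le hx ht.1).ne'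
  have hderiv : ∀ t ∈ Set.Ioo x y, HasDerivAt f
      ((p.derivative.eval t * t ^ m - p.eval t * (m * t ^ (m - 1))) / (t ^ m) ^ 2) t := by
    intro t ht
    have ht0 : (0:ℝ) < t := lt_trans hx ht.1
    exact (p.hasDerivAt t).div (hasDerivAt_pow m t) (pow_ne_zero m ht0.ne')
  have hfx : f x = f y := by simp [hf, hpx, hpy]
  obtain ⟨z, hz, hz0⟩ := exists_hasDerivAt_eq_zero hxy hcont hfx hderiv
  have hzpos : (0:ℝ) < z := lt_trans hx hz.1
  refine ⟨z, hz.1, hz.2, ?_⟩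
  have hnum : p.derivative.eval z * z ^ m - p.eval z * (m * z ^ (m - 1)) = 0 := by
    have hden : ((z ^ m) ^ 2 : ℝ) ≠ 0 := pow_ne_zero _ (pow_ne_zero m hzpos.ne')
    field_simp at hz0
    linarith [hz0]
  have hgoal : z * p.derivative.eval z - (m : ℝ) * p.eval z = 0 := by
    cases m with
    | zero => simp at hnum; simp [hnum]
    | succ n =>
      have hzn : z ^ (n + 1) = z ^ n * z := pow_succ z n
      rw [hzn] at hnum
      simp only [Nat.add_sub_cancel] at hnum
      push_cast at hnum
      have h2 : (z * p.derivative.eval z - ((n : ℝ) + 1) * p.eval z) * z ^ n = 0 := by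
        linear_combination hnum
      push_cast
      exact (mul_eq_zero.1 h2).resolve_right (pow_ne_zero n hzpos.ne')
  simp only [eval_sub, eval_mul, eval_X, eval_C]
  linarith [hgoal]

end Descartes

namespace Descartes
open Polynomial

lemma sign_mixed {a b c : ℝ} (h1 : 0 < a * b) (h2 : b * c < 0) : a * c < 0 := by
  rcases mul_pos_iff.1 h1 with ⟨ha, hb⟩ | ⟨ha, hb⟩ <;>
    rcases mul_neg_iff.1 h2 with ⟨hb', hc⟩ | ⟨hb', hc⟩
  · exact mul_neg_of_pos_of_neg ha hc
  · linarith
  · linarith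
  · exact mul_neg_of_neg_of_pos ha hc

lemma step (p : Polynomial ℝ) (hp : p ≠ 0) (hV : 1 ≤ V (ncl p)) :
    ∃ m : ℕ, (X * derivative p - C (m : ℝ) * p) ≠ 0 ∧
      V (ncl (X * derivative p - C (m : ℝ) * p)) = V (ncl p) - 1 := by
  obtain ⟨l1, b, c, l2, heq, hpos, hbc, hVc⟩ := V_split ncl_ne_zero hV
  rw [ncl_eq_map] at heq
  obtain ⟨K1, K2', hK, hl1, hm2⟩ := List.map_eq_append_iff.1 heq
  obtain ⟨m, K3, hK2, hb, hm3⟩ := List.map_eq_cons_iff.1 hm2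
  obtain ⟨k1, K4, hK3, hc, hl2⟩ := List.map_eq_cons_iff.1 hm3
  subst hK2; subst hK3
  set d := p.natDegree with hd
  set q := X * derivative p - C (m : ℝ) * p with hqdef
  -- sortedness
  have hsort := K_sorted p
  rw [hK] at hsort
  have hs2 := List.pairwise_append.1 hsort
  have hmk1 : m < k1 := (List.pairwise_cons.1 hs2.2.1).1 k1 (by simp)
  have hK1lt : ∀ a ∈ K1, a < m := fun a ha => hs2.2.2 a ha m (by simp)
  have hmK4 : ∀ a ∈ k1 :: K4, m < a := (List.pairwise_cons.1 hs2.2.1).1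
  have hk1K : k1 ∈ K p := by rw [hK]; simp
  have hk1d : k1 ≤ d := Nat.lt_succ_iff.1 (mem_K.1 hk1K).1
  have hmd : m < d := lt_of_lt_of_le hmk1 hk1d
  have hcoefq : ∀ k, q.coeff k = ((k : ℝ) - m) * p.coeff k := coeff_Q p m
  have hqd : q.coeff d ≠ 0 := by
    rw [hcoefq]
    exact mul_ne_zero (sub_ne_zero.2 (Nat.cast_lt.2 hmd).ne')
      (fun h => hp (leadingCoeff_eq_zero.1 h))
  have hq0 : q ≠ 0 := fun h => hqd (by rw [h]; simp)
  have hqdeg : q.natDegree = d :=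
    le_antisymm (natDegree_le_iff_coeff_eq_zero.2 (fun N hN => by
      rw [hcoefq, coeff_eq_zero_of_natDegree_lt hN, mul_zero]))
      (le_natDegree_of_ne_zero hqd)
  have hKq : K q = K1 ++ k1 :: K4 := by
    have h1 : K q = (K p).filter (fun k => decide (k ≠ m)) := by
      rw [K, K, hqdeg, ← hd, List.filter_filter]
      apply List.filter_congr
      intro k _
      rw [hcoefq k]
      by_cases h1 : k = m
      · subst h1; simp
      · by_cases h2 : p.coeff k = 0 <;>
          simp [h1, h2, sub_ne_zero, Nat.cast_inj]
    rw [h1, hK, List.filter_append]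
    congr 1
    · exact List.filter_eq_self.2 fun a ha => decide_eq_true (Nat.ne_of_lt (hK1lt a ha))
    · rw [List.filter_cons, if_neg (by simp)]
      exact List.filter_eq_self.2 fun a ha => decide_eq_true (Nat.ne_of_gt (hmK4 a ha))
  have hnclq : ncl q = (K1.map q.coeff) ++ q.coeff k1 :: (K4.map q.coeff) := by
    rw [ncl_eq_map, hKq]
    simp
  refine ⟨m, hq0, ?_⟩
  have hprefix : ∀ x ∈ K1.map q.coeff, 0 < x * q.coeff k1 := by
    intro x hx
    obtain ⟨k, hkK1, rfl⟩ := List.mem_map.1 hx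
    have hA : 0 < p.coeff k * b := hpos _ (hl1 ▸ List.mem_map_of_mem hkK1)
    have hkc : p.coeff k * p.coeff k1 < 0 := sign_mixed hA (hc ▸ hbc)
    have hneg : ((k : ℝ) - m) < 0 := sub_neg.2 (Nat.cast_lt.2 (hK1lt k hkK1))
    have hpos2 : (0 : ℝ) < (k1 : ℝ) - m := sub_pos.2 (Nat.cast_lt.2 hmk1)
    have key : 0 < (((k : ℝ) - m) * ((k1 : ℝ) - m)) * (p.coeff k * p.coeff k1) :=
      mul_pos_of_neg_of_neg (mul_neg_of_neg_of_pos hneg hpos2) hkc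
    rw [hcoefq, hcoefq]
    nlinarith [key]
  rw [hnclq, V_append _ _ _ hprefix]
  have hcongr : V (q.coeff k1 :: K4.map q.coeff) = V (c :: l2) := by
    rw [← hc, ← hl2]
    have : (q.coeff k1 :: K4.map q.coeff) = (k1 :: K4).map q.coeff := by simp
    rw [this, ← List.map_cons]
    apply V_congr
    rw [List.forall₂_map_left_iff, List.forall₂_map_right_iff, List.forall₂_same]
    intro k hk
    have hk' : m < k := hmK4 k hk
    have hkK : k ∈ K p := by rw [hK]; simp [List.mem_cons.1 hk]
    have hck : p.coeff k ≠ 0 := (mem_K.1 hkK).2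
    rw [hcoefq]
    have h1 : (0 : ℝ) < (k : ℝ) - m := sub_pos.2 (Nat.cast_lt.2 hk')
    have h2 : 0 < p.coeff k * p.coeff k := mul_self_pos.2 hck
    nlinarith [mul_pos h1 h2]
  rw [hcongr, hVc]

end Descartes

namespace Descartes
open Polynomial

lemma card_step (p q : Polynomial ℝ) (hp : p ≠ 0) (hq : q ≠ 0)
    (hrolle : ∀ x y : ℝ, 0 < x → x < y → p.eval x = 0 → p.eval y = 0 →
      ∃ z, x < z ∧ z < y ∧ q.eval z = 0) :
    (p.roots.toFinset.filter fun x => 0 < x).card ≤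
      (q.roots.toFinset.filter fun x => 0 < x).card + 1 := by
  set s := p.roots.toFinset.filter fun x => 0 < x with hs
  set t := q.roots.toFinset.filter fun x => 0 < x with ht
  rcases Nat.eq_zero_or_pos s.card with h0 | hpos1
  · omega
  set n := s.card with hn
  let e := s.orderIsoOfFin rfl
  have hmem : ∀ i : Fin n, ((e i : ℝ) ∈ s) := fun i => (e i).2
  have hroot : ∀ i : Fin n, 0 < (e i : ℝ) ∧ p.eval (e i : ℝ) = 0 := by
    intro i
    have h := Finset.mem_filter.1 (hmem i)
    exact ⟨h.2, (mem_roots hp).1 (Multiset.mem_toFinset.1 h.1)⟩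
  let a : Fin (n - 1) → Fin n := fun i => ⟨i.1, lt_of_lt_of_le i.2 (Nat.sub_le n 1)⟩
  let b : Fin (n - 1) → Fin n := fun i => ⟨i.1 + 1, by have := i.2; omega⟩
  have key : ∀ i : Fin (n - 1), ∃ z, (e (a i) : ℝ) < z ∧ z < (e (b i) : ℝ) ∧ q.eval z = 0 := by
    intro i
    have hab : a i < b i := by simp [a, b, Fin.mk_lt_mk]
    have hlt : (e (a i) : ℝ) < (e (b i) : ℝ) := by
      exact_mod_cast e.strictMono hab
    exact hrolle _ _ (hroot (a i)).1 hlt (hroot (a i)).2 (hroot (b i)).2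
  choose z hz1 hz2 hz3 using key
  have hzt : ∀ i, z i ∈ t := by
    intro i
    rw [ht, Finset.mem_filter, Multiset.mem_toFinset, mem_roots hq]
    exact ⟨hz3 i, lt_trans (hroot (a i)).1 (hz1 i)⟩
  have hmono : ∀ i j : Fin (n - 1), i < j → z i < z j := by
    intro i j hij
    have h1 : z i < (e (b i) : ℝ) := hz2 i
    have h2 : (e (b i) : ℝ) ≤ (e (a j) : ℝ) := by
      have : b i ≤ a j := by
        simp only [a, b, Fin.mk_le_mk]
        exact hij
      exact_mod_cast e.monotone this
    exact lt_trans (lt_of_lt_of_le h1 h2) (hz1 j)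
  have hinj : Set.InjOn z ↑(Finset.univ : Finset (Fin (n - 1))) := by
    intro i _ j _ hij
    rcases lt_trichotomy i j with h | h | h
    · exact absurd hij (hmono i j h).ne
    · exact h
    · exact absurd hij (hmono j i h).ne'
  have hcard : (Finset.univ : Finset (Fin (n - 1))).card ≤ t.card :=
    Finset.card_le_card_of_injOn z (fun i _ => hzt i) hinj
  rw [Finset.card_univ, Fintype.card_fin] at hcard
  omega

lemma main : ∀ v : ℕ, ∀ p : Polynomial ℝ, p ≠ 0 → V (ncl p) = v →
    (p.roots.toFinset.filter fun x => 0 < x).card ≤ v := by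
  intro v
  induction v with
  | zero =>
    intro p hp h0
    have hemp : (p.roots.toFinset.filter fun x => 0 < x) = ∅ :=
      Finset.filter_eq_empty_iff.2 (by
        intro x hx hxpos
        exact eval_ne_zero_of_V_eq_zero hp h0 hxpos
          ((mem_roots hp).1 (Multiset.mem_toFinset.1 hx)))
    simp [hemp]
  | succ v ih =>
    intro p hp hV
    obtain ⟨m, hq0, hVq⟩ := step p hp (by omega)
    have h1 := card_step p _ hp hq0
      (fun x y hx hxy hex hey => rolle_step p m hx hxy hex hey)
    have h2 := ih _ hq0 (by omega)
    omega

end Descartes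


lemma Descartes.signChanges_eq (p : Polynomial ℝ) :
    signChanges p = Descartes.V (Descartes.ncl p) := rfl

/-- Descartes' rule of signs (weak form): the number of positive real roots of a nonzero
real polynomial, counted without multiplicity, is at most the number of sign changes in
its sequence of nonzero coefficients. -/
theorem descartes_rule_of_signs (p : Polynomial ℝ) (hp : p ≠ 0) :
    (p.roots.toFinset.filter fun x => 0 < x).card ≤ signChanges p := by
  rw [Descartes.signChanges_eq]
  exact Descartes.main _ p hp rfl
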